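/- arXiv:2101.05264 — 2 statements merged into one kernel-verified Lean document; each statement's English description precedes it below -/
import Mathlib

section
/- Let D be a solid tournament on a countably infinite vertex type. Then D has a solid ray, and there is a solid ray R₊ such that for every solid ray R of D there exist a ray R₁ equivalent to R₊, a ray R₂ equivalent to R, and an infinite family of pairwise vertex-disjoint finite directed paths in D, each starting at a vertex in the image of R₁ and ending at a vertex in the image of R₂. (This says that the end represented by R₊ is the least element of the end order ≤_Ω of D.) -/
/-- Mutual reachability in `D − X`: `u` and `v` lie in the same strong component
of the restriction of `E` to the complement of `X`. -/
def SameComp {V : Type*} (E : V → V → Prop) (X : Set V) (u v : V) : Prop :=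
  Relation.ReflTransGen (fun a b => a ∉ X ∧ b ∉ X ∧ E a b) u v ∧
  Relation.ReflTransGen (fun a b => a ∉ X ∧ b ∉ X ∧ E a b) v u

/-- A digraph is solid if deleting any finite vertex set leaves only finitely many
strong components. -/
def IsSolid {V : Type*} (E : V → V → Prop) : Prop :=
  ∀ X : Set V, X.Finite →
    {C : Set V | ∃ v, v ∉ X ∧ C = {u | u ∉ X ∧ SameComp E X u v}}.Finite

/-- A ray in a digraph. -/
def IsRay {V : Type*} (E : V → V → Prop) (r : ℕ → V) : Prop :=
  Function.Injective r ∧ ∀ n : ℕ, E (r n) (r (n + 1))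

/-- A solid ray: it has a tail in a single strong component of `D − X`
for every finite `X`. -/
def IsSolidRay {V : Type*} (E : V → V → Prop) (r : ℕ → V) : Prop :=
  IsRay E r ∧ ∀ X : Set V, X.Finite →
    ∃ N : ℕ, (∀ n : ℕ, N ≤ n → r n ∉ X) ∧
      (∀ m n : ℕ, N ≤ m → N ≤ n → SameComp E X (r m) (r n))

/-- Two rays are equivalent if for every finite `X` they have tails in
the same strong component of `D − X`. -/
def RayEquiv {V : Type*} (E : V → V → Prop) (r r' : ℕ → V) : Prop :=
  ∀ X : Set V, X.Finite →
    ∃ N M : ℕ, (∀ n : ℕ, N ≤ n → r n ∉ X) ∧ (∀ m : ℕ, M ≤ m → r' m ∉ X) ∧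
      (∀ n m : ℕ, N ≤ n → M ≤ m → SameComp E X (r n) (r' m))

namespace StmtAux

variable {V : Type*} (E : V → V → Prop)

/-- The edge relation of `D - X`. -/
def Rel (X : Set V) (a b : V) : Prop := a ∉ X ∧ b ∉ X ∧ E a b

/-- Reachability in `D - X`. -/
def Reach (X : Set V) (u v : V) : Prop := Relation.ReflTransGen (Rel E X) u v

variable {E}

lemma sameComp_def {X : Set V} {u v : V} :
    SameComp E X u v ↔ Reach E X u v ∧ Reach E X v u := Iff.rfl

lemma reach_mono {X X' : Set V} (h : X ⊆ X') {u v : V} (hr : Reach E X' u v) :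
    Reach E X u v :=
  Relation.ReflTransGen.mono (r := Rel E X') (p := Rel E X) (fun a b ⟨h1, h2, h3⟩ => ⟨fun ha => h1 (h ha), fun hb => h2 (h hb), h3⟩) u v hr

lemma sameComp_mono {X X' : Set V} (h : X ⊆ X') {u v : V} (hr : SameComp E X' u v) :
    SameComp E X u v := ⟨reach_mono h hr.1, reach_mono h hr.2⟩

lemma sameComp_refl {X : Set V} (u : V) : SameComp E X u u :=
  ⟨Relation.ReflTransGen.refl, Relation.ReflTransGen.refl⟩

lemma sameComp_symm {X : Set V} {u v : V} (h : SameComp E X u v) : SameComp E X v u :=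
  ⟨h.2, h.1⟩

lemma sameComp_trans {X : Set V} {u v w : V} (h : SameComp E X u v) (h' : SameComp E X v w) :
    SameComp E X u w := ⟨h.1.trans h'.1, h'.2.trans h.2⟩

/-- The strong component of `v` in `D - X`. -/
def comp (E : V → V → Prop) (X : Set V) (v : V) : Set V := {u | u ∉ X ∧ SameComp E X u v}

lemma mem_comp_self {X : Set V} {v : V} (hv : v ∉ X) : v ∈ comp E X v :=
  ⟨hv, sameComp_refl v⟩

lemma comp_eq_of_sameComp {X : Set V} {u v : V} (h : SameComp E X u v) :
    comp E X u = comp E X v := by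
  ext w
  exact ⟨fun ⟨hw, hs⟩ => ⟨hw, sameComp_trans hs h⟩,
         fun ⟨hw, hs⟩ => ⟨hw, sameComp_trans hs (sameComp_symm h)⟩⟩

lemma comp_subset_comp {X X' : Set V} (h : X ⊆ X') (v : V) :
    comp E X' v ⊆ comp E X v := fun u ⟨hu, hs⟩ => ⟨fun hx => hu (h hx), sameComp_mono h hs⟩

lemma comps_finite (hs : IsSolid E) {X : Set V} (hX : X.Finite) :
    {C : Set V | ∃ v, v ∉ X ∧ C = comp E X v}.Finite := hs X hX



section Tour

lemma tot (h_tour : ∀ u v : V, u ≠ v → Xor' (E u v) (E v u))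
    {u v : V} (h : u ≠ v) : E u v ∨ E v u := by
  rcases h_tour u v h with ⟨h1, _⟩ | ⟨h1, _⟩
  exacts [Or.inl h1, Or.inr h1]

lemma asymm (h_irr : ∀ v : V, ¬ E v v) (h_tour : ∀ u v : V, u ≠ v → Xor' (E u v) (E v u))
    {u v : V} (h : E u v) : ¬ E v u := by
  by_cases huv : u = v
  · subst huv; exact absurd h (h_irr u)
  rcases h_tour u v huv with ⟨_, h2⟩ | ⟨_, h2⟩
  · exact h2
  · exact absurd h h2

lemma reach_total (h_tour : ∀ u v : V, u ≠ v → Xor' (E u v) (E v u))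
    {X : Set V} {u v : V} (hu : u ∉ X) (hv : v ∉ X) :
    Reach E X u v ∨ Reach E X v u := by
  by_cases huv : u = v
  · subst huv; exact Or.inl Relation.ReflTransGen.refl
  rcases tot h_tour huv with h | h
  · exact Or.inl (Relation.ReflTransGen.single ⟨hu, hv, h⟩)
  · exact Or.inr (Relation.ReflTransGen.single ⟨hv, hu, h⟩)

end Tour

/-- minimum of a finite set under a total transitive reflexive relation -/
lemma finset_exists_min {α : Type*} (R : α → α → Prop)
    (hrefl : ∀ a, R a a)
    (htrans : ∀ a b c, R a b → R b c → R a c) (s : Finset α)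
    (htot : ∀ a ∈ s, ∀ b ∈ s, R a b ∨ R b a) (hne : s.Nonempty) :
    ∃ a ∈ s, ∀ b ∈ s, R a b := by
  classical
  induction s using Finset.induction_on with
  | empty => exact absurd hne (by simp)
  | @insert a s ha ih =>
    by_cases hs : s.Nonempty
    · obtain ⟨m, hm, hmin⟩ := ih (fun x hx y hy =>
        htot x (Finset.mem_insert_of_mem hx) y (Finset.mem_insert_of_mem hy)) hs
      rcases htot a (Finset.mem_insert_self a s) m (Finset.mem_insert_of_mem hm) with h | h
      · refine ⟨a, Finset.mem_insert_self a s, fun b hb => ?_⟩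
        rcases Finset.mem_insert.mp hb with rfl | hb
        · exact hrefl b
        · exact htrans a m b h (hmin b hb)
      · refine ⟨m, Finset.mem_insert_of_mem hm, fun b hb => ?_⟩
        rcases Finset.mem_insert.mp hb with rfl | hb
        · exact h
        · exact hmin b hb
    · simp only [Finset.not_nonempty_iff_eq_empty] at hs
      subst hs
      exact ⟨a, Finset.mem_insert_self a _, fun b hb => by
        rcases Finset.mem_insert.mp hb with rfl | hb
        · exact hrefl b
        · exact absurd hb (by simp)⟩


section Solid
variable [Infinite V]

lemma union_comps {X : Set V} (hX : X.Finite) (hs : IsSolid E)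
    (hfin : ∀ v, v ∉ X → v ∈ (Xᶜ : Set V) → (comp E X v).Finite) : False := by
  have hcov : (Xᶜ : Set V) ⊆ ⋃ C ∈ {C : Set V | ∃ v, v ∉ X ∧ C = comp E X v}, C := by
    intro v hv
    exact Set.mem_biUnion ⟨v, hv, rfl⟩ (mem_comp_self hv)
  have hXc : (Xᶜ : Set V).Infinite := hX.infinite_compl
  refine hXc (Set.Finite.subset ?_ hcov)
  refine Set.Finite.biUnion (comps_finite hs hX) ?_
  rintro C ⟨v, hv, rfl⟩
  exact hfin v hv hv

lemma exists_infinite_comp (hs : IsSolid E) {X : Set V} (hX : X.Finite) :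
    ∃ v, v ∉ X ∧ (comp E X v).Infinite := by
  by_contra h
  push_neg at h
  refine union_comps hX hs (fun v hv _ => ?_)
  rcases Set.not_infinite.mp (by intro hi; exact absurd hi (by simpa using h v hv)) with h'
  exact h'

lemma exists_min_infinite_comp (h_tour : ∀ u v : V, u ≠ v → Xor' (E u v) (E v u))
    (hs : IsSolid E) {X : Set V} (hX : X.Finite) :
    ∃ a, a ∉ X ∧ (comp E X a).Infinite ∧
      ∀ b, b ∉ X → (comp E X b).Infinite → Reach E X a b := by
  classical
  set 𝒞 : Set (Set V) := {C : Set V | (∃ v, v ∉ X ∧ C = comp E X v) ∧ C.Infinite} with h𝒞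
  have h𝒞fin : 𝒞.Finite := (comps_finite hs hX).subset (fun C hC => hC.1)
  have hrep : ∀ C ∈ 𝒞, ∃ v, v ∉ X ∧ comp E X v = C := by
    rintro C ⟨⟨v, hv, rfl⟩, _⟩; exact ⟨v, hv, rfl⟩
  choose! rep hrep1 hrep2 using hrep
  obtain ⟨v₀, hv₀, hinf₀⟩ := exists_infinite_comp hs hX
  have h𝒞ne : (comp E X v₀) ∈ 𝒞 := ⟨⟨v₀, hv₀, rfl⟩, hinf₀⟩
  set s : Finset V := h𝒞fin.toFinset.image rep with hsdef
  have hmem : ∀ v ∈ s, v ∉ X ∧ (comp E X v).Infinite := by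
    intro v hv
    simp only [hsdef, Finset.mem_image, Set.Finite.mem_toFinset] at hv
    obtain ⟨C, hC, rfl⟩ := hv
    exact ⟨hrep1 C hC, by rw [hrep2 C hC]; exact hC.2⟩
  have hne : s.Nonempty := by
    refine ⟨rep (comp E X v₀), ?_⟩
    simp only [hsdef, Finset.mem_image, Set.Finite.mem_toFinset]
    exact ⟨comp E X v₀, h𝒞ne, rfl⟩
  obtain ⟨a, has, hmin⟩ := finset_exists_min (Reach E X)
    (fun _ => Relation.ReflTransGen.refl) (fun _ _ _ h h' => h.trans h') s
    (fun x hx y hy => reach_total h_tour (hmem x hx).1 (hmem y hy).1) hne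
  refine ⟨a, (hmem a has).1, (hmem a has).2, fun b hb hbinf => ?_⟩
  have hbC : comp E X b ∈ 𝒞 := ⟨⟨b, hb, rfl⟩, hbinf⟩
  have hb' : rep (comp E X b) ∈ s := by
    simp only [hsdef, Finset.mem_image, Set.Finite.mem_toFinset]
    exact ⟨comp E X b, hbC, rfl⟩
  have h1 : Reach E X a (rep (comp E X b)) := hmin _ hb'
  have h2 : b ∈ comp E X (rep (comp E X b)) := by
    rw [hrep2 _ hbC]; exact mem_comp_self hb
  exact h1.trans h2.2.2

/-- Nestedness of minimal infinite components. -/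
lemma min_comp_nested (h_tour : ∀ u v : V, u ≠ v → Xor' (E u v) (E v u))
    (hs : IsSolid E) {X X' : Set V} (hX : X.Finite) (hX' : X'.Finite) (hXX' : X ⊆ X')
    {a a' : V} (ha : a ∉ X) (hainf : (comp E X a).Infinite)
    (hamin : ∀ b, b ∉ X → (comp E X b).Infinite → Reach E X a b)
    (ha' : a' ∉ X') (ha'inf : (comp E X' a').Infinite)
    (ha'min : ∀ b, b ∉ X' → (comp E X' b).Infinite → Reach E X' a' b)
    : comp E X' a' ⊆ comp E X a := by
  classical
  have ha'X : a' ∉ X := fun h => ha' (hXX' h)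
  have hinf1 : (comp E X a').Infinite :=
    ha'inf.mono (comp_subset_comp hXX' a')
  have hreach1 : Reach E X a a' := hamin a' ha'X hinf1
  -- find u ∈ comp E X a, u ∉ X', with infinite X'-component
  set T : Set V := comp E X a \ X' with hT
  have hTinf : T.Infinite := hainf.diff hX'
  have hex : ∃ u ∈ T, (comp E X' u).Infinite := by
    by_contra hno
    push_neg at hno
    have hcov : T ⊆ ⋃ C ∈ {C : Set V | ∃ v, v ∉ X' ∧ C = comp E X' v}, (C ∩ T) := by
      intro u hu
      exact Set.mem_biUnion ⟨u, hu.2, rfl⟩ ⟨mem_comp_self hu.2, hu⟩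
    refine hTinf (Set.Finite.subset ?_ hcov)
    refine Set.Finite.biUnion (comps_finite hs hX') ?_
    rintro C ⟨v, hv, rfl⟩
    by_cases hCT : (comp E X' v ∩ T).Nonempty
    · obtain ⟨y, hyC, hyT⟩ := hCT
      have : comp E X' y = comp E X' v := comp_eq_of_sameComp hyC.2
      have hyfin : (comp E X' y).Finite := hno y hyT
      rw [this] at hyfin
      exact hyfin.inter_of_left T
    · rw [Set.not_nonempty_iff_eq_empty] at hCT
      rw [hCT]; exact Set.finite_empty
  obtain ⟨u, huT, huinf⟩ := hex
  have hreach2 : Reach E X a' u := reach_mono hXX' (ha'min u huT.2 huinf)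
  have hreach3 : Reach E X u a := huT.1.2.1
  have hsame : SameComp E X a' a := ⟨hreach2.trans hreach3, hreach1⟩
  rw [← comp_eq_of_sameComp hsame]
  exact (comp_subset_comp hXX' a').trans
    (le_of_eq (comp_eq_of_sameComp (sameComp_refl a')))

end Solid

lemma chain_head_rel {α : Type*} {r : α → α → Prop} {a b : α} {l : List α}
    (h : List.Chain r a l) (hb : l.head? = some b) : r a b := by
  cases l with
  | nil => simp at hb
  | cons c t =>
    rw [List.head?_cons] at hb
    cases hb
    exact (List.chain_cons.mp h).1

lemma reach_in_comp {X : Set V} {c u v : V} (hu : u ∈ comp E X c) (hv : v ∈ comp E X c) :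
    Relation.ReflTransGen (fun a b => b ∈ comp E X c ∧ E a b) u v := by
  have h : Reach E X u v := hu.2.1.trans hv.2.2
  revert hu
  induction h using Relation.ReflTransGen.head_induction_on with
  | refl => exact fun _ => Relation.ReflTransGen.refl
  | @head a b hab hbv ih =>
    intro ha
    have hb : b ∈ comp E X c := by
      refine ⟨hab.2.1, ?_, ?_⟩
      · exact hbv.trans hv.2.1
      · exact ha.2.2.tail hab
    exact Relation.ReflTransGen.head ⟨hb, hab.2.2⟩ (ih hb)

lemma extract_ray (h_W : ∀ v : V, True) (W : ℕ → V) (hE : ∀ t, E (W t) (W (t + 1)))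
    (hfin : ∀ v : V, {t | W t = v}.Finite) :
    ∃ s : ℕ → ℕ, StrictMono s ∧ IsRay E (fun n => W (s n)) := by
  classical
  have hne : ∀ t : ℕ, ((hfin (W t)).toFinset).Nonempty := fun t => ⟨t, by simp⟩
  set m : ℕ → ℕ := fun t => (hfin (W t)).toFinset.max' (hne t) with hm
  have hmW : ∀ t, W (m t) = W t := fun t => by
    have := (hfin (W t)).toFinset.max'_mem (hne t)
    simpa using this
  have hmle : ∀ t t', W t' = W t → t' ≤ m t := fun t t' h =>
    (hfin (W t)).toFinset.le_max' t' (by simpa using h)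
  have hmcongr : ∀ t t', W t = W t' → m t = m t' := by
    intro t t' h
    simp only [hm]
    congr 1 <;> rw [h]
  set s : ℕ → ℕ := fun n => Nat.rec (m 0) (fun _ sn => m (sn + 1)) n with hs
  have hs0 : s 0 = m 0 := rfl
  have hssucc : ∀ n, s (n + 1) = m (s n + 1) := fun n => rfl
  have hWs : ∀ n, W (s (n + 1)) = W (s n + 1) := fun n => by rw [hssucc]; exact hmW _
  have hmono : StrictMono s := strictMono_nat_of_lt_succ (fun n => by
    have : s n + 1 ≤ m (s n + 1) := hmle _ _ rfl
    rw [hssucc]; omega)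
  have hms : ∀ n, m (s n) = s n := by
    intro n
    cases n with
    | zero => rw [hs0]; exact hmcongr _ _ (hmW 0)
    | succ k => rw [hssucc]; exact hmcongr _ _ (hmW _)
  refine ⟨s, hmono, ⟨?_, ?_⟩⟩
  · intro i j hij
    simp only at hij
    have : s i = s j := by
      have h1 := hms i
      have h2 := hms j
      rw [← h1, ← h2]
      exact hmcongr _ _ hij
    exact hmono.injective this
  · intro n
    simp only
    rw [hWs n]
    exact hE (s n)


section Walk
variable [Nonempty V]

lemma exists_ray_through (A : ℕ → Set V)
    (hsub : ∀ k, A (k + 1) ⊆ A k)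
    (hinf : ∀ k, (A k).Infinite)
    (hconn : ∀ k, ∀ u ∈ A k, ∀ v ∈ A k,
      Relation.ReflTransGen (fun a b => b ∈ A k ∧ E a b) u v)
    (hout : ∀ v : V, ∃ k, v ∉ A k) :
    ∃ r : ℕ → V, IsRay E r ∧ ∀ k, ∃ N, ∀ n, N ≤ n → r n ∈ A k := by
  classical
  have hAle : ∀ j k, j ≤ k → A k ⊆ A j := by
    intro j k hjk
    induction k, hjk using Nat.le_induction with
    | base => exact subset_rfl
    | succ k hk ih => exact (hsub k).trans ih
  -- segments
  have hseg : ∀ k, ∀ u : V, u ∈ A k → ∃ q : List V, q ≠ [] ∧ List.Chain E u q ∧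
      (∀ w ∈ q, w ∈ A k) ∧ ∃ v', q.getLast? = some v' ∧ v' ∈ A (k + 1) := by
    intro k u hu
    obtain ⟨v, hv⟩ := ((hinf (k + 1)).diff (Set.finite_singleton u)).nonempty
    have hvA : v ∈ A (k + 1) := hv.1
    have hvu : v ≠ u := by simpa using hv.2
    have hvk : v ∈ A k := hsub k hvA
    obtain ⟨l, hl, hlast⟩ := List.exists_isChain_cons_of_relationReflTransGen (hconn k u hu v hvk)
    have hlne : l ≠ [] := by
      rintro rfl
      simp only [List.getLast_singleton] at hlast
      exact hvu hlast.symm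
    refine ⟨l, hlne, hl.imp (fun x y h => h.2), ?_, v, ?_, hvA⟩
    · exact List.IsChain.cons_induction _ _ hl (fun x y hxy _ => hxy.1) hu
    · rw [List.getLast?_eq_getLast hlne, ← List.getLast_cons (a := u) hlne, hlast]
  choose! seg hseg1 hseg2 hseg3 hseg4 using hseg
  -- the nested walk lists
  let St : ℕ → Type _ := fun k => {l : List V // l ≠ [] ∧ l.Chain' E ∧
      ∃ v, l.getLast? = some v ∧ v ∈ A k}
  have hinit : ∃ v₀ : V, v₀ ∈ A 0 := (hinf 0).nonempty
  let init : St 0 := ⟨[hinit.choose], by simp, List.isChain_singleton _,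
      hinit.choose, by simp, hinit.choose_spec⟩
  let step : ∀ k, St k → St (k + 1) := fun k s =>
    ⟨s.val ++ seg k s.2.2.2.choose, by
      obtain ⟨hne, hch, hex⟩ := s.2
      have hspec := hex.choose_spec
      set v := hex.choose with hv
      have hvA : v ∈ A k := hspec.2
      have hq1 := hseg1 k v hvA
      have hq2 := hseg2 k v hvA
      have hq3 := hseg3 k v hvA
      obtain ⟨v', hv'last, hv'A⟩ := hseg4 k v hvA
      refine ⟨by simp [hne], ?_, v', ?_, hv'A⟩
      · apply List.isChain_append.mpr
        refine ⟨hch, ?_, ?_⟩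
        · have : List.Chain' E (v :: seg k v) := hq2
          exact this.tail
        · intro x hx y hy
          rw [hspec.1] at hx
          have hx' : x = v := by simpa [eq_comm] using hx
          subst hx'
          exact chain_head_rel hq2 (Option.mem_def.mp hy)
      · rw [List.getLast?_append_of_ne_nil _ hq1]
        exact hv'last⟩
  let pst : ∀ k, St k := fun k => Nat.rec init step k
  let P : ℕ → List V := fun k => (pst k).val
  have hPsucc : ∀ k, P (k + 1) = P k ++ seg k (pst k).2.2.2.choose := fun k => rfl
  have hPne : ∀ k, P k ≠ [] := fun k => (pst k).2.1
  have hPch : ∀ k, (P k).Chain' E := fun k => (pst k).2.2.1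
  have hlastA : ∀ k, (pst k).2.2.2.choose ∈ A k := fun k => (pst k).2.2.2.choose_spec.2
  have hsegne : ∀ k, seg k (pst k).2.2.2.choose ≠ [] := fun k => hseg1 k _ (hlastA k)
  have hsegA : ∀ k, ∀ w ∈ seg k (pst k).2.2.2.choose, w ∈ A k :=
    fun k => hseg3 k _ (hlastA k)
  have hlen : ∀ k, k < (P k).length := by
    intro k
    induction k with
    | zero => simp [P, pst, init]
    | succ k ih =>
      rw [hPsucc k, List.length_append]
      have := List.length_pos_iff.mpr (hsegne k)
      omega
  have hprefix : ∀ j k, j ≤ k → P j <+: P k := by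
    intro j k hjk
    induction k, hjk using Nat.le_induction with
    | base => exact List.prefix_rfl
    | succ k hk ih =>
      rw [hPsucc k]
      exact ih.trans (List.prefix_append _ _)
  have hsuf : ∀ j k, j ≤ k → ∀ t, (P j).length - 1 ≤ t → ∀ ht : t < (P k).length,
      (P k)[t] ∈ A j := by
    intro j k hjk
    induction k, hjk using Nat.le_induction with
    | base =>
      intro t h1 h2
      have hlenpos : 0 < (P j).length := List.length_pos_iff.mpr (hPne j)
      have ht : t = (P j).length - 1 := by omega
      subst ht
      have h5 : (P j).getLast (hPne j) = (pst j).2.2.2.choose := by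
        have h6 := (pst j).2.2.2.choose_spec.1
        exact Option.some.inj ((List.getLast?_eq_getLast (hPne j)).symm.trans h6)
      have h7 : (P j)[(P j).length - 1]'h2 = (P j).getLast (hPne j) :=
        (List.getLast_eq_getElem (hPne j)).symm
      exact (h7.trans h5).symm ▸ hlastA j
    | succ k hk ih =>
      intro t h1 h2
      by_cases hcase : t < (P k).length
      · exact ((hprefix k (k + 1) (Nat.le_succ k)).getElem hcase) ▸ ih t h1 hcase
      · push_neg at hcase
        simp only [hPsucc k]
        rw [List.getElem_append_right hcase]
        refine hAle j k hk ?_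
        exact hsegA k _ (List.getElem_mem _)
  let W : ℕ → V := fun t => (P t)[t]'(hlen t)
  have hWP : ∀ t k, t ≤ k → ∀ h : t < (P k).length, (P k)[t] = W t := by
    intro t k htk h
    exact ((hprefix t k htk).getElem (hlen t)).symm
  have hWedge : ∀ t, E (W t) (W (t + 1)) := by
    intro t
    have hch := List.isChain_iff_getElem.mp (hPch (t + 1))
    have h1 : t + 1 < (P (t + 1)).length := hlen (t + 1)
    have h2 : t < (P (t + 1)).length - 1 := by omega
    have := hch t (by omega)
    rwa [hWP t (t + 1) (by omega) (by omega), hWP (t + 1) (t + 1) le_rfl h1] at this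
  have htail : ∀ k t, (P k).length - 1 ≤ t → W t ∈ A k := by
    intro k t h
    have hkt : k ≤ t := by have := hlen k; omega
    exact hsuf k t hkt t h (hlen t)
  have hfin : ∀ v : V, {t | W t = v}.Finite := by
    intro v
    obtain ⟨k, hk⟩ := hout v
    refine (Set.finite_Iio (P k).length).subset ?_
    intro t ht
    by_contra hc
    simp only [Set.mem_Iio, not_lt] at hc
    exact hk (ht ▸ htail k t (by omega))
  obtain ⟨s, hsmono, hray⟩ := extract_ray (fun _ => trivial) W hWedge hfin
  refine ⟨fun n => W (s n), hray, fun k => ⟨(P k).length, fun n hn => ?_⟩⟩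
  exact htail k (s n) (by have : n ≤ s n := hsmono.le_apply; omega)

end Walk
end StmtAux

open StmtAux

theorem stmt_8 {V : Type*} [Countable V] [Infinite V] (E : V → V → Prop)
    (h_irr : ∀ v : V, ¬ E v v)
    (h_tour : ∀ u v : V, u ≠ v → Xor' (E u v) (E v u))
    (h_solid : IsSolid E) :
    (∃ R : ℕ → V, IsSolidRay E R) ∧
    ∃ Rplus : ℕ → V, IsSolidRay E Rplus ∧
      ∀ R : ℕ → V, IsSolidRay E R →
        ∃ R₁ R₂ : ℕ → V, IsRay E R₁ ∧ IsRay E R₂ ∧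
          RayEquiv E R₁ Rplus ∧ RayEquiv E R₂ R ∧
          ∃ P : ℕ → List V,
            (∀ i : ℕ, (P i).Chain' E ∧ (P i).Nodup ∧
              (∃ x ∈ Set.range R₁, (P i).head? = some x) ∧
              (∃ y ∈ Set.range R₂, (P i).getLast? = some y)) ∧
            (∀ i j : ℕ, i ≠ j → ∀ x : V, x ∈ P i → x ∉ P j) := by
  classical
  obtain ⟨e⟩ : Nonempty (ℕ ≃ V) := nonempty_equiv_of_countable
  set Xs : ℕ → Set V := fun k => e '' Set.Iio k with hXs
  have hXsfin : ∀ k, (Xs k).Finite := fun k => (Set.finite_Iio k).image e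
  have hXsmono : ∀ j k, j ≤ k → Xs j ⊆ Xs k := fun j k hjk =>
    Set.image_mono (Set.Iio_subset_Iio hjk)
  have hXscover : ∀ X : Set V, X.Finite → ∃ k, X ⊆ Xs k := by
    intro X hX
    refine ⟨(hX.toFinset.sup fun v => e.symm v) + 1, fun v hv => ?_⟩
    refine ⟨e.symm v, ?_, by simp⟩
    simp only [Set.mem_Iio]
    exact Nat.lt_succ_of_le (Finset.le_sup (by simpa using hv))
  have hXsmem : ∀ v : V, v ∈ Xs (e.symm v + 1) := fun v => ⟨e.symm v, by simp, by simp⟩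
  have hmin : ∀ k, ∃ a, a ∉ Xs k ∧ (comp E (Xs k) a).Infinite ∧
      ∀ b, b ∉ Xs k → (comp E (Xs k) b).Infinite → Reach E (Xs k) a b :=
    fun k => exists_min_infinite_comp h_tour h_solid (hXsfin k)
  choose a ha1 ha2 ha3 using hmin
  set A : ℕ → Set V := fun k => comp E (Xs k) (a k) with hA
  have hsub : ∀ k, A (k + 1) ⊆ A k := fun k =>
    min_comp_nested h_tour h_solid (hXsfin k) (hXsfin (k + 1))
      (hXsmono k (k + 1) (Nat.le_succ k)) (ha1 k) (ha2 k) (ha3 k)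
      (ha1 (k + 1)) (ha2 (k + 1)) (ha3 (k + 1))
  have hAX : ∀ k, ∀ w ∈ A k, w ∉ Xs k := fun k w hw => hw.1
  have hconn : ∀ k, ∀ u ∈ A k, ∀ v ∈ A k,
      Relation.ReflTransGen (fun x y => y ∈ A k ∧ E x y) u v :=
    fun k u hu v hv => reach_in_comp hu hv
  have hout : ∀ v : V, ∃ k, v ∉ A k :=
    fun v => ⟨e.symm v + 1, fun h => (hAX _ _ h) (hXsmem v)⟩
  obtain ⟨Rp, hRpray, hRptail⟩ := exists_ray_through (E := E) A hsub (fun k => ha2 k) hconn hout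
  have tail_same : ∀ k (u v : V), u ∈ A k → v ∈ A k → SameComp E (Xs k) u v :=
    fun k u v hu hv => sameComp_trans hu.2 (sameComp_symm hv.2)
  have hRpsolid : IsSolidRay E Rp := by
    refine ⟨hRpray, fun X hX => ?_⟩
    obtain ⟨k, hk⟩ := hXscover X hX
    obtain ⟨N, hN⟩ := hRptail k
    exact ⟨N, fun n hn hmem => (hAX k _ (hN n hn)) (hk hmem),
      fun m n hm hn => sameComp_mono hk (tail_same k _ _ (hN m hm) (hN n hn))⟩
  have hequivRR : ∀ R : ℕ → V, IsSolidRay E R → RayEquiv E R R := by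
    intro R hR X hX
    obtain ⟨N, h1, h2⟩ := hR.2 X hX
    exact ⟨N, N, h1, h1, fun n m hn hm => h2 n m hn hm⟩
  refine ⟨⟨Rp, hRpsolid⟩, Rp, hRpsolid, ?_⟩
  intro R hR
  by_cases hb : ∃ K : ℕ, ∀ n m : ℕ, K ≤ n → K ≤ m → ¬ E (Rp n) (R m)
  · -- R is equivalent to Rp
    obtain ⟨K, hK⟩ := hb
    have claim : RayEquiv E R Rp := by
      intro X hX
      obtain ⟨k, hk⟩ := hXscover X hX
      obtain ⟨N', hN'⟩ := hRptail k
      obtain ⟨N, hN1, hN2⟩ := hR.2 (Xs k) (hXsfin k)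
      set n₀ := max N' K with hn₀
      set m₀ := max N K with hm₀
      have h1 : Rp n₀ ∈ A k := hN' n₀ (le_max_left _ _)
      have h2 : R m₀ ∉ Xs k := hN1 m₀ (le_max_left _ _)
      have hcompR : (comp E (Xs k) (R m₀)).Infinite := by
        have himg : (R '' Set.Ici N).Infinite := Set.Infinite.image (hR.1.1.injOn) (Set.Ici_infinite N)
        refine himg.mono ?_
        rintro _ ⟨m, hm, rfl⟩
        exact ⟨hN1 m hm, hN2 m m₀ hm (le_max_left _ _)⟩
      have hreach1 : Reach E (Xs k) (Rp n₀) (R m₀) :=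
        h1.2.1.trans (ha3 k (R m₀) h2 hcompR)
      have hreach2 : Reach E (Xs k) (R m₀) (Rp n₀) := by
        by_cases heq : R m₀ = Rp n₀
        · rw [heq]
          exact Relation.ReflTransGen.refl
        · have hE : E (R m₀) (Rp n₀) := by
            rcases tot h_tour heq with h | h
            · exact h
            · exact absurd h (hK n₀ m₀ (le_max_right _ _) (le_max_right _ _))
          exact Relation.ReflTransGen.single ⟨h2, h1.1, hE⟩
      have hsame₀ : SameComp E (Xs k) (Rp n₀) (R m₀) := ⟨hreach1, hreach2⟩
      refine ⟨m₀, n₀, ?_, ?_, ?_⟩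
      · exact fun n hn hmem => hN1 n (le_trans (le_max_left _ _) hn) (hk hmem)
      · exact fun m hm hmem => hAX k _ (hN' m (le_trans (le_max_left _ _) hm)) (hk hmem)
      · intro n m hn hm
        refine sameComp_mono hk ?_
        have e1 : SameComp E (Xs k) (R n) (R m₀) :=
          hN2 n m₀ (le_trans (le_max_left _ _) hn) (le_max_left _ _)
        have e2 : SameComp E (Xs k) (Rp n₀) (Rp m) :=
          tail_same k _ _ h1 (hN' m (le_trans (le_max_left _ _) hm))
        exact sameComp_trans (sameComp_trans e1 (sameComp_symm hsame₀)) e2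
    refine ⟨R, R, hR.1, hR.1, claim, hequivRR R hR, fun i => [R i], ?_, ?_⟩
    · intro i
      exact ⟨List.isChain_singleton _, List.nodup_singleton _,
        ⟨R i, Set.mem_range_self i, rfl⟩, ⟨R i, Set.mem_range_self i, rfl⟩⟩
    · intro i j hij x hxi hxj
      simp only [List.mem_singleton] at hxi hxj
      exact hij (hR.1.1 (hxi ▸ hxj ▸ rfl : R i = R j))
  · push_neg at hb
    have hstep : ∀ S : Finset V, ∃ nm : ℕ × ℕ,
        E (Rp nm.1) (R nm.2) ∧ Rp nm.1 ∉ S ∧ R nm.2 ∉ S := by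
      intro S
      have h1 : {t : ℕ | Rp t ∈ (S : Set V)}.Finite :=
        (S.finite_toSet).preimage (hRpray.1.injOn)
      have h2 : {t : ℕ | R t ∈ (S : Set V)}.Finite :=
        (S.finite_toSet).preimage (hR.1.1.injOn)
      obtain ⟨K1, hK1⟩ := h1.bddAbove
      obtain ⟨K2, hK2⟩ := h2.bddAbove
      obtain ⟨n, m, hn, hm, hE⟩ := hb (max K1 K2 + 1)
      refine ⟨(n, m), hE, fun hmem => ?_, fun hmem => ?_⟩
      · have := hK1 hmem; omega
      · have := hK2 hmem; omega
    choose pick hp1 hp2 hp3 using hstep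
    set G : ℕ → Finset V :=
      fun i => Nat.rec ∅ (fun _ S => S ∪ {Rp (pick S).1, R (pick S).2}) i with hG
    have hGsucc : ∀ i, G (i + 1) = G i ∪ {Rp (pick (G i)).1, R (pick (G i)).2} :=
      fun i => rfl
    have hGmono : ∀ i j, i ≤ j → G i ⊆ G j := by
      intro i j hij
      induction j, hij using Nat.le_induction with
      | base => exact subset_rfl
      | succ j hj ih =>
        refine ih.trans ?_
        rw [hGsucc j]
        exact Finset.subset_union_left
    set F : ℕ → ℕ × ℕ := fun i => pick (G i) with hF
    have hmemG : ∀ i, Rp (F i).1 ∈ G (i + 1) ∧ R (F i).2 ∈ G (i + 1) := by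
      intro i
      rw [hGsucc i]
      constructor <;> (apply Finset.mem_union_right; simp [hF])
    have hne : ∀ i, Rp (F i).1 ≠ R (F i).2 :=
      fun i h => h_irr _ (h ▸ hp1 (G i))
    refine ⟨Rp, R, hRpray, hR.1, hequivRR Rp hRpsolid, hequivRR R hR,
      fun i => [Rp (F i).1, R (F i).2], ?_, ?_⟩
    · intro i
      refine ⟨List.isChain_cons_cons.mpr ⟨hp1 (G i), List.isChain_singleton _⟩, ?_, ?_, ?_⟩
      · simp [List.nodup_cons, hne i]
      · exact ⟨Rp (F i).1, Set.mem_range_self _, rfl⟩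
      · exact ⟨R (F i).2, Set.mem_range_self _, by simp [List.getLast?]⟩
    · have key : ∀ i j, i < j → ∀ x, x ∈ [Rp (F i).1, R (F i).2] →
          x ∉ [Rp (F j).1, R (F j).2] := by
        intro i j hij x hxi hxj
        have hxG : x ∈ G j := by
          refine hGmono (i + 1) j hij ?_
          rcases List.mem_pair.mp hxi with rfl | rfl
          · exact (hmemG i).1
          · exact (hmemG i).2
        rcases List.mem_pair.mp hxj with rfl | rfl
        · exact hp2 (G j) hxG
        · exact hp3 (G j) hxG
      intro i j hij x hxi hxj
      rcases Nat.lt_or_ge i j with h | h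
      · exact key i j h x hxi hxj
      · exact key j i (by omega) x hxj hxi
end

section
/- Every ray of D₀ whose image contains a vertex of branch B₀ and a vertex of branch B₂ contains only finitely many vertices of branch B₁, and the same holds for every double ray of D₀. -/
/-- The edge relation of the counterexample tournament `D₀` on `Fin 3 × ℕ`:
edges go up in branch index; within a branch, to the immediate successor,
or back down by at least two. -/
def E₀ : Fin 3 × ℕ → Fin 3 × ℕ → Prop := fun p q =>
  p.1 < q.1 ∨ (p.1 = q.1 ∧ q.2 = p.2 + 1) ∨ (p.1 = q.1 ∧ p.2 ≥ q.2 + 2)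

lemma E₀_mono {p q : Fin 3 × ℕ} (h : E₀ p q) : p.1 ≤ q.1 := by
  rcases h with h | ⟨h, _⟩ | ⟨h, _⟩
  · exact le_of_lt h
  · exact le_of_eq h
  · exact le_of_eq h

theorem stmt_13 :
    (∀ r : ℕ → Fin 3 × ℕ, Function.Injective r →
      (∀ n : ℕ, E₀ (r n) (r (n + 1))) →
      (∃ m : ℕ, (r m).1 = 0) → (∃ m : ℕ, (r m).1 = 2) →
      {n : ℕ | (r n).1 = 1}.Finite) ∧
    (∀ w : ℤ → Fin 3 × ℕ, Function.Injective w →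
      (∀ n : ℤ, E₀ (w n) (w (n + 1))) →
      (∃ m : ℤ, (w m).1 = 0) → (∃ m : ℤ, (w m).1 = 2) →
      {n : ℤ | (w n).1 = 1}.Finite) := by
  constructor
  · intro r _ hE _ ⟨m2, h2⟩
    have mono : ∀ n m : ℕ, n ≤ m → (r n).1 ≤ (r m).1 := by
      intro n m h
      induction m with
      | zero => simp_all
      | succ k ih =>
        rcases Nat.lt_or_ge n (k + 1) with h' | h'
        · exact le_trans (ih (Nat.lt_succ_iff.mp h')) (E₀_mono (hE k))
        · exact le_of_eq (congrArg (fun x => (r x).1) (by omega))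
    apply Set.Finite.subset (Set.finite_Iio m2)
    intro n hn
    simp only [Set.mem_setOf_eq] at hn
    by_contra hlt
    have := mono m2 n (not_lt.mp hlt)
    rw [h2, hn] at this
    exact absurd this (by decide)
  · intro w _ hE ⟨m0, h0⟩ ⟨m2, h2⟩
    have mono : ∀ (n : ℤ) (k : ℕ), (w n).1 ≤ (w (n + k)).1 := by
      intro n k
      induction k with
      | zero => simp
      | succ k ih =>
        have := E₀_mono (hE (n + k))
        have e : n + ((k : ℤ) + 1) = n + k + 1 := by ring
        push_cast
        rw [e]
        exact le_trans ih this
    have mono' : ∀ n m : ℤ, n ≤ m → (w n).1 ≤ (w m).1 := by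
      intro n m h
      have : m = n + (m - n).toNat := by omega
      rw [this]; exact mono n _
    apply Set.Finite.subset (Set.finite_Icc m0 m2)
    intro n hn
    simp only [Set.mem_setOf_eq] at hn
    constructor
    · by_contra h
      have := mono' n m0 (le_of_lt (not_le.mp h))
      rw [h0, hn] at this
      exact absurd this (by decide)
    · by_contra h
      have := mono' m2 n (le_of_lt (not_le.mp h))
      rw [h2, hn] at this
      exact absurd this (by decide)
end
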